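/- Consider the semilinear evolution equation ẋ(t)=Ax(t)+f(t,x(t),u(t)) on a Banach space X, where A generates a C0-semigroup T(·) and f satisfies conditions (SL1), (SL2), (SL3) and (SL4); let γ∈K∞ be the function from (SL3). Then for every r>0, ε>0 and T>0 there exists δ>0 such that the following holds: for every t0≥0, x0∈X and piecewise continuous input u with ∫₀^∞ γ(‖u(s)‖)ds ≤ δ, and every t*∈[t0,t0+T], if the mild solutions x(·) (with input u) and z(·) (with zero input), both with initial datum x(t0)=z(t0)=x0, are defined on [t0,t*] and satisfy ‖x(t)‖ ≤ r and ‖z(t)‖ ≤ r for all t∈[t0,t*], then ‖x(t)−z(t)‖ ≤ ε for all t∈[t0,t*]. -/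

import Mathlib

open Set Filter MeasureTheory

/-- A function of class `K`. -/
def ClassK (α : ℝ → ℝ) : Prop :=
  ContinuousOn α (Ici 0) ∧ StrictMonoOn α (Ici 0) ∧ α 0 = 0

/-- A function of class `K∞`. -/
def ClassKInf (α : ℝ → ℝ) : Prop := ClassK α ∧ Tendsto α atTop atTop

/-- A function of class `KL`. -/
def ClassKL (β : ℝ → ℝ → ℝ) : Prop :=
  (∀ t ≥ (0:ℝ), ClassK (fun r => β r t)) ∧
  (∀ r ≥ (0:ℝ), AntitoneOn (fun t => β r t) (Ici 0) ∧
    Tendsto (fun t => β r t) atTop (nhds 0))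

/-- A strongly continuous semigroup of bounded linear operators on `X`. -/
structure C0Semigroup (X : Type*) [NormedAddCommGroup X] [NormedSpace ℝ X] where
  T : ℝ → X →L[ℝ] X
  map_zero : T 0 = ContinuousLinearMap.id ℝ X
  map_add : ∀ s t : ℝ, 0 ≤ s → 0 ≤ t → T (s + t) = (T s).comp (T t)
  strong_cont : ∀ x : X, ContinuousOn (fun t => T t x) (Ici 0)

variable {X Uv : Type*} [NormedAddCommGroup X] [NormedSpace ℝ X] [CompleteSpace X]
  [NormedAddCommGroup Uv] [NormedSpace ℝ Uv]

/-- A piecewise continuous function `u : [0,∞) → Uv`. -/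
def PWCont (u : ℝ → Uv) : Prop :=
  ∃ σ : ℕ → ℝ, σ 0 = 0 ∧ StrictMono σ ∧ Tendsto σ atTop atTop ∧
    ∀ k : ℕ, ∃ v : ℝ → Uv, ContinuousOn v (Icc (σ k) (σ (k + 1))) ∧
      ∀ t ∈ Ico (σ k) (σ (k + 1)), u t = v t

/-- Condition (SL1): `f` is piecewise continuous in `t` and continuous in its other
variables. -/
def CondSL1 (f : ℝ → X → Uv → X) : Prop :=
  ∃ σ : ℕ → ℝ, σ 0 = 0 ∧ StrictMono σ ∧ Tendsto σ atTop atTop ∧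
    ∀ k : ℕ, ∃ g : ℝ → X → Uv → X,
      ContinuousOn (fun p : ℝ × X × Uv => g p.1 p.2.1 p.2.2)
        {p : ℝ × X × Uv | p.1 ∈ Icc (σ k) (σ (k + 1))} ∧
      ∀ t ∈ Ico (σ k) (σ (k + 1)), ∀ (ξ : X) (μ : Uv), f t ξ μ = g t ξ μ

/-- `L` is a Lipschitz constant for `f(t, ·, μ)` on the ball of radius `r`, uniformly in
`t ≥ 0` and in `‖μ‖ ≤ r`. -/
def CondSL2With (f : ℝ → X → Uv → X) (r L : ℝ) : Prop :=
  ∀ t ≥ (0:ℝ), ∀ (ξ ω : X) (μ : Uv), ‖ξ‖ ≤ r → ‖ω‖ ≤ r → ‖μ‖ ≤ r →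
    ‖f t ξ μ - f t ω μ‖ ≤ L * ‖ξ - ω‖

/-- Condition (SL2): `f(t,ξ,μ)` is Lipschitz in `ξ` on bounded sets, uniformly in `t` and
for `μ` in bounded sets. -/
def CondSL2 (f : ℝ → X → Uv → X) : Prop :=
  ∀ r > (0:ℝ), ∃ L, 0 ≤ L ∧ CondSL2With f r L

/-- Condition (SL3), with the bound witnessed by `γ ∈ K∞` and a nondecreasing
`N : [0,∞) → (0,∞)`. -/
def CondSL3With (f : ℝ → X → Uv → X) (γ N : ℝ → ℝ) : Prop :=
  ClassKInf γ ∧ MonotoneOn N (Ici 0) ∧ (∀ r ≥ (0:ℝ), 0 < N r) ∧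
    ∀ t ≥ (0:ℝ), ∀ (ξ : X) (μ : Uv), ‖f t ξ μ‖ ≤ N ‖ξ‖ * (1 + γ ‖μ‖)

/-- Condition (SL3). -/
def CondSL3 (f : ℝ → X → Uv → X) : Prop := ∃ γ N, CondSL3With f γ N

/-- Condition (SL4): continuity in the input at the zero input, uniformly in time and on
bounded sets of states. -/
def CondSL4 (f : ℝ → X → Uv → X) : Prop :=
  ∀ r > (0:ℝ), ∀ ε > (0:ℝ), ∃ δ > (0:ℝ),
    ∀ t ≥ (0:ℝ), ∀ (ξ : X) (μ : Uv), ‖ξ‖ ≤ r → ‖μ‖ ≤ δ →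
      ‖f t ξ μ - f t ξ 0‖ < ε

/-- `x` is a mild (weak) solution of `ẋ = Ax + f(t,x,u(t))` on the interval `[t0, T]`. -/
def IsMild (Tg : C0Semigroup X) (f : ℝ → X → Uv → X) (u : ℝ → Uv)
    (t0 T : ℝ) (x : ℝ → X) : Prop :=
  ContinuousOn x (Icc t0 T) ∧
    ∀ t ∈ Icc t0 T,
      x t = Tg.T (t - t0) (x t0) + ∫ s in t0..t, Tg.T (t - s) (f s (x s) (u s))


section Aux

variable {X Uv' : Type*} [NormedAddCommGroup X] [NormedSpace ℝ X] [CompleteSpace X]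

lemma sg_bound (Tg : C0Semigroup X) (b : ℝ) :
    ∃ M : ℝ, 1 ≤ M ∧ ∀ τ ∈ Icc (0:ℝ) b, ‖Tg.T τ‖ ≤ M := by
  have h : ∀ x : X, ∃ C, ∀ i : Icc (0:ℝ) b, ‖Tg.T i x‖ ≤ C := by
    intro x
    obtain ⟨C, hC⟩ := isCompact_Icc.exists_bound_of_continuousOn
      ((Tg.strong_cont x).mono Icc_subset_Ici_self)
    exact ⟨C, fun i => hC i i.2⟩
  obtain ⟨C', hC'⟩ := banach_steinhaus (g := fun i : Icc (0:ℝ) b => Tg.T i) h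
  exact ⟨max C' 1, le_max_right _ _, fun τ hτ => le_trans (hC' ⟨τ, hτ⟩) (le_max_left _ _)⟩

omit [CompleteSpace X] in
lemma sg_cont (Tg : C0Semigroup X) {t b M : ℝ} (hM : ∀ τ ∈ Icc (0:ℝ) b, ‖Tg.T τ‖ ≤ M)
    {A : Set ℝ} {w : ℝ → X} (hw : ContinuousOn w A)
    (hA : ∀ s ∈ A, 0 ≤ t - s ∧ t - s ≤ b) :
    ContinuousOn (fun s => Tg.T (t - s) (w s)) A := by
  intro s₀ hs₀
  have hwn : Tendsto (fun s => ‖w s - w s₀‖) (nhdsWithin s₀ A) (nhds 0) := by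
    have h0 : Tendsto (fun s => w s - w s₀) (nhdsWithin s₀ A) (nhds 0) := by
      have := (hw s₀ hs₀).sub (continuousWithinAt_const (b := w s₀))
      simp only [ContinuousWithinAt, Pi.sub_apply, sub_self] at this
      exact this
    simpa using h0.norm
  have h1 : Tendsto (fun s => Tg.T (t - s) (w s - w s₀)) (nhdsWithin s₀ A) (nhds 0) := by
    refine squeeze_zero_norm' (a := fun s => M * ‖w s - w s₀‖) ?_ ?_
    · filter_upwards [self_mem_nhdsWithin] with s hs
      exact ((Tg.T (t - s)).le_opNorm _).trans
        (mul_le_mul_of_nonneg_right (hM _ ⟨(hA s hs).1, (hA s hs).2⟩) (norm_nonneg _))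
    · simpa using hwn.const_mul M
  have h2 : Tendsto (fun s => Tg.T (t - s) (w s₀)) (nhdsWithin s₀ A)
      (nhds (Tg.T (t - s₀) (w s₀))) := by
    have hc : ContinuousOn (fun τ => Tg.T τ (w s₀)) (Ici 0) := Tg.strong_cont (w s₀)
    have hsub : ContinuousOn (fun s : ℝ => t - s) A :=
      (continuous_const.sub continuous_id).continuousOn
    exact (hc.comp hsub fun s hs => (hA s hs).1) s₀ hs₀
  have h3 : Tendsto (fun s => Tg.T (t - s) (w s)) (nhdsWithin s₀ A)
      (nhds (Tg.T (t - s₀) (w s₀))) := by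
    have h4 := h1.add h2
    rw [zero_add] at h4
    apply h4.congr
    intro s
    rw [← map_add]
    congr 1
    abel
  exact h3

lemma cover_mem {σ : ℕ → ℝ} (h0 : σ 0 = 0) (ht : Tendsto σ atTop atTop) {s : ℝ}
    (hs : 0 ≤ s) : ∃ k, s ∈ Ico (σ k) (σ (k + 1)) := by
  have hex : ∃ n, s < σ n := by
    obtain ⟨n, hn⟩ := (ht.eventually_gt_atTop s).exists
    exact ⟨n, hn⟩
  classical
  set n := Nat.find hex with hn
  have hns : s < σ n := Nat.find_spec hex
  have hn0 : n ≠ 0 := by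
    intro h
    rw [h, h0] at hns
    exact absurd hns (not_lt.2 hs)
  obtain ⟨k, hkn⟩ := Nat.exists_eq_succ_of_ne_zero hn0
  have hk : ¬ s < σ k := Nat.find_min hex (by omega)
  refine ⟨k, ⟨not_lt.1 hk, ?_⟩⟩
  rw [show k + 1 = n by omega]
  exact hns

lemma aesm_of_pieces {E : Type*} [NormedAddCommGroup E] {F : ℝ → E}
    {ι : Type*} [Countable ι] {S : ι → Set ℝ} (hSm : ∀ i, MeasurableSet (S i))
    {A : Set ℝ} (hAm : MeasurableSet A) (hA : A ⊆ ⋃ i, S i)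
    (h : ∀ i, ∃ G : ℝ → E, ContinuousOn G (S i ∩ A) ∧ ∀ s ∈ S i ∩ A, F s = G s) :
    AEStronglyMeasurable F (volume.restrict A) := by
  have hAeq : A = ⋃ i, (S i ∩ A) := by
    rw [← iUnion_inter]
    exact (inter_eq_right.2 hA).symm
  rw [hAeq, aestronglyMeasurable_iUnion_iff]
  intro i
  obtain ⟨G, hGc, hGeq⟩ := h i
  have hmeas : MeasurableSet (S i ∩ A) := (hSm i).inter hAm
  refine (hGc.aestronglyMeasurable hmeas).congr ?_
  rw [EventuallyEq, ae_restrict_iff' hmeas]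
  exact ae_of_all _ fun s hs => (hGeq s hs).symm

end Aux


set_option maxHeartbeats 1000000

/-- Lemma 5.4: under (SL1)–(SL4) (with `γ` from (SL3)), the semilinear system satisfies
Assumption 1 with the admissible functional `u ↦ ∫₀^∞ γ(‖u(s)‖) ds`. -/


theorem semilinear_assumptionA1 (Tg : C0Semigroup X) (f : ℝ → X → Uv → X)
    (hSL1 : CondSL1 f) (hSL2 : CondSL2 f)
    (γ N : ℝ → ℝ) (hSL3 : CondSL3With f γ N) (hSL4 : CondSL4 f) :
    ∀ r > (0:ℝ), ∀ ε > (0:ℝ), ∀ T > (0:ℝ), ∃ δ > (0:ℝ),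
      ∀ t0 ≥ (0:ℝ), ∀ u : ℝ → Uv, PWCont u →
        (∫⁻ s in Ioi (0:ℝ), ENNReal.ofReal (γ ‖u s‖)) ≤ ENNReal.ofReal δ →
        ∀ tstar ∈ Icc t0 (t0 + T), ∀ x z : ℝ → X,
          IsMild Tg f u t0 tstar x →
          IsMild Tg f (fun _ => 0) t0 tstar z →
          x t0 = z t0 →
          (∀ t ∈ Icc t0 tstar, ‖x t‖ ≤ r ∧ ‖z t‖ ≤ r) →
          ∀ t ∈ Icc t0 tstar, ‖x t - z t‖ ≤ ε := by
  intro r hr ε hε T hT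
  obtain ⟨M, hM1, hM⟩ := sg_bound Tg T
  have hM0 : (0:ℝ) < M := lt_of_lt_of_le one_pos hM1
  obtain ⟨L, hL0, hLip0⟩ := hSL2 r hr
  set L' : ℝ := L + 1 with hL'def
  have hL'pos : (0:ℝ) < L' := by positivity
  have hLip : ∀ t ≥ (0:ℝ), ∀ (ξ ω : X) (μ : Uv), ‖ξ‖ ≤ r → ‖ω‖ ≤ r → ‖μ‖ ≤ r →
      ‖f t ξ μ - f t ω μ‖ ≤ L' * ‖ξ - ω‖ := by
    intro t ht ξ ω μ h1 h2 h3
    have := hLip0 t ht ξ ω μ h1 h2 h3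
    nlinarith [norm_nonneg (ξ - ω)]
  obtain ⟨⟨⟨hγc, hγm, hγ0⟩, -⟩, hNmono, hNpos, hf3⟩ := hSL3
  have hγnn : ∀ y : ℝ, 0 ≤ y → 0 ≤ γ y := by
    intro y hy
    rcases eq_or_lt_of_le hy with hh | hh
    · rw [← hh, hγ0]
    · rw [← hγ0]
      exact (hγm self_mem_Ici (mem_Ici.2 hy) hh).le
  set K : ℝ := M * L' with hKdef
  have hK : (0:ℝ) < K := mul_pos hM0 hL'pos
  set E : ℝ := Real.exp (K * T) with hEdef
  have hE1 : (1:ℝ) ≤ E := Real.one_le_exp (by positivity)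
  have hE0 : (0:ℝ) < E := lt_of_lt_of_le one_pos hE1
  set ε₁ : ℝ := ε / (2 * M * T * E) with hε₁def
  have hε₁pos : (0:ℝ) < ε₁ := by
    rw [hε₁def]; exact div_pos hε (by positivity)
  obtain ⟨δ₂, hδ₂pos, hδ₂⟩ := hSL4 r hr ε₁ hε₁pos
  have hgδ : (0:ℝ) < γ δ₂ := by
    rw [← hγ0]
    exact hγm self_mem_Ici (mem_Ici.2 hδ₂pos.le) hδ₂pos
  set c : ℝ := 2 / γ δ₂ + 1 with hcdef
  have hc : (0:ℝ) < c := by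
    rw [hcdef]
    have := div_pos (zero_lt_two (α := ℝ)) hgδ
    linarith
  have hNr : (0:ℝ) < N r := hNpos r hr.le
  set δ : ℝ := ε / (2 * M * N r * c * E) with hδdef
  have hδpos : (0:ℝ) < δ := by
    rw [hδdef]
    exact div_pos hε (by positivity)
  refine ⟨δ, hδpos, ?_⟩
  intro t0 ht0 u hu hIntu tstar hts x z hx hz hxz hbound
  obtain ⟨hts1, hts2⟩ := hts
  obtain ⟨σu, hσu0, hσum, hσut, hσuv⟩ := hu
  choose v hvc hveq using hσuv
  obtain ⟨σf, hσf0, hσfm, hσft, hσfg⟩ := hSL1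
  choose gk hgkc hgkeq using hσfg
  -- the closure of γ
  set γcl : ℝ → ℝ := fun y => γ (max y 0) with hγcldef
  have hγclc : Continuous γcl :=
    hγc.comp_continuous (continuous_id.max continuous_const)
      (fun y => mem_Ici.2 (le_max_right _ _))
  have hγcl_norm : ∀ μ : Uv, γcl ‖μ‖ = γ ‖μ‖ := by
    intro μ
    rw [hγcldef]
    simp [max_eq_left (norm_nonneg μ)]
  set φ : ℝ → ℝ := fun s => γ ‖u s‖ with hφdef
  have hφnn : ∀ s, 0 ≤ φ s := fun s => hγnn _ (norm_nonneg _)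
  -- measurability and integrability of φ
  have hφm : AEStronglyMeasurable φ (volume.restrict (Ioc t0 tstar)) := by
    apply aesm_of_pieces (S := fun j => Ico (σu j) (σu (j + 1)))
      (fun j => measurableSet_Ico) measurableSet_Ioc
    · intro s hs
      exact mem_iUnion.2 (cover_mem hσu0 hσut (le_trans ht0 hs.1.le))
    · intro j
      refine ⟨fun s => γcl ‖v j s‖, ?_, ?_⟩
      · exact hγclc.comp_continuousOn
          (((hvc j).mono (inter_subset_left.trans Ico_subset_Icc_self)).norm)
      · intro s hs
        rw [hφdef]
        simp only
        rw [hveq j s hs.1, hγcl_norm]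
  have hsubIoi : Ioc t0 tstar ⊆ Ioi (0:ℝ) := fun s hs => lt_of_le_of_lt ht0 hs.1
  have hφint : IntegrableOn φ (Ioc t0 tstar) := by
    refine ⟨hφm, ?_⟩
    rw [hasFiniteIntegral_iff_ofReal (ae_of_all _ hφnn)]
    calc ∫⁻ s in Ioc t0 tstar, ENNReal.ofReal (φ s)
        ≤ ∫⁻ s in Ioi (0:ℝ), ENNReal.ofReal (γ ‖u s‖) := lintegral_mono_set hsubIoi
      _ ≤ ENNReal.ofReal δ := hIntu
      _ < ⊤ := ENNReal.ofReal_lt_top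
  have hφbound : ∀ tt ∈ Icc t0 tstar, (∫ s in t0..tt, φ s) ≤ δ := by
    rintro tt ⟨h1, h2⟩
    rw [intervalIntegral.integral_of_le h1]
    have hmsub : Ioc t0 tt ⊆ Ioc t0 tstar := Ioc_subset_Ioc_right h2
    rw [integral_eq_lintegral_of_nonneg_ae (ae_of_all _ hφnn)
      (hφm.mono_measure (Measure.restrict_mono hmsub le_rfl))]
    have hle : ∫⁻ s in Ioc t0 tt, ENNReal.ofReal (φ s) ≤ ENNReal.ofReal δ :=
      le_trans (lintegral_mono_set (hmsub.trans hsubIoi)) hIntu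
    calc (∫⁻ s in Ioc t0 tt, ENNReal.ofReal (φ s)).toReal
        ≤ (ENNReal.ofReal δ).toReal := ENNReal.toReal_mono ENNReal.ofReal_ne_top hle
      _ = δ := ENNReal.toReal_ofReal hδpos.le
  -- the clamped distance function
  set q : ℝ → ℝ := fun s => max t0 (min s tstar) with hqdef
  have hqc : Continuous q := continuous_const.max (continuous_id.min continuous_const)
  have hqmem : ∀ s, q s ∈ Icc t0 tstar :=
    fun s => ⟨le_max_left _ _, max_le hts1 (min_le_right _ _)⟩
  have hqeq : ∀ s ∈ Icc t0 tstar, q s = s := by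
    rintro s ⟨h1, h2⟩
    rw [hqdef]
    simp only
    rw [min_eq_left h2, max_eq_right h1]
  set g : ℝ → ℝ := fun s => ‖x (q s) - z (q s)‖ with hgdef
  have hgc : Continuous g := by
    have hxzc : ContinuousOn (fun s => ‖x s - z s‖) (Icc t0 tstar) := (hx.1.sub hz.1).norm
    exact hxzc.comp_continuous hqc hqmem
  have hgnn : ∀ s, 0 ≤ g s := fun s => norm_nonneg _
  have hgeq : ∀ s ∈ Icc t0 tstar, g s = ‖x s - z s‖ := by
    intro s hs
    rw [hgdef]
    simp only
    rw [hqeq s hs]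
  set h : ℝ → ℝ := fun t => ∫ s in t0..t, g s with hhdef
  have hder : ∀ t : ℝ, HasDerivAt h (g t) t :=
    fun t => (hgc.integral_hasStrictDerivAt t0 t).hasDerivAt
  have hcont : Continuous h := continuous_iff_continuousAt.2 fun t => (hder t).continuousAt
  set C : ℝ := M * ε₁ * T + M * (N r * c) * δ with hCdef
  have hCnn : (0:ℝ) ≤ C := by
    rw [hCdef]
    have h1 : (0:ℝ) ≤ M * ε₁ * T := by positivity
    have h2 : (0:ℝ) ≤ M * (N r * c) * δ := by positivity
    linarith
  -- the key integral inequality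
  have key : ∀ tt ∈ Icc t0 tstar, g tt ≤ C + K * h tt := by
    rintro tt ⟨htt1, htt2⟩
    have httT : tt - t0 ≤ T := by linarith
    have hmem : ∀ s ∈ Icc t0 tt, 0 ≤ tt - s ∧ tt - s ≤ T :=
      fun s hs => ⟨by linarith [hs.2], by linarith [hs.1]⟩
    have hs0 : ∀ s ∈ Icc t0 tt, (0:ℝ) ≤ s := fun s hs => le_trans ht0 hs.1
    have hsubIcc : Icc t0 tt ⊆ Icc t0 tstar := Icc_subset_Icc_right htt2
    have hxr : ∀ s ∈ Icc t0 tt, ‖x s‖ ≤ r := fun s hs => (hbound s (hsubIcc hs)).1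
    have hzr : ∀ s ∈ Icc t0 tt, ‖z s‖ ≤ r := fun s hs => (hbound s (hsubIcc hs)).2
    have hopn : ∀ s ∈ Icc t0 tt, ∀ y : X, ‖Tg.T (tt - s) y‖ ≤ M * ‖y‖ := by
      intro s hs y
      exact ((Tg.T (tt - s)).le_opNorm y).trans
        (mul_le_mul_of_nonneg_right (hM _ ⟨(hmem s hs).1, (hmem s hs).2⟩) (norm_nonneg _))
    -- measurability of the two integrands
    have hG1m : AEStronglyMeasurable (fun s => Tg.T (tt - s) (f s (x s) (u s)))
        (volume.restrict (Ioc t0 tt)) := by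
      apply aesm_of_pieces (ι := ℕ × ℕ)
        (S := fun p => Ico (σf p.1) (σf (p.1 + 1)) ∩ Ico (σu p.2) (σu (p.2 + 1)))
        (fun p => measurableSet_Ico.inter measurableSet_Ico) measurableSet_Ioc
      · intro s hs
        have hs0' : (0:ℝ) ≤ s := le_trans ht0 hs.1.le
        obtain ⟨k, hk⟩ := cover_mem hσf0 hσft hs0'
        obtain ⟨j, hj⟩ := cover_mem hσu0 hσut hs0'
        exact mem_iUnion.2 ⟨(k, j), ⟨hk, hj⟩⟩
      · rintro ⟨k, j⟩
        refine ⟨fun s => Tg.T (tt - s) (gk k s (x s) (v j s)), ?_, ?_⟩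
        · have hsubD : (Ico (σf k) (σf (k + 1)) ∩ Ico (σu j) (σu (j + 1))) ∩ Ioc t0 tt ⊆
              Icc (σf k) (σf (k + 1)) ∩ (Icc (σu j) (σu (j + 1)) ∩ Icc t0 tt) := by
            rintro s ⟨⟨h1, h2⟩, h3⟩
            exact ⟨Ico_subset_Icc_self h1, Ico_subset_Icc_self h2, Ioc_subset_Icc_self h3⟩
          refine ContinuousOn.mono ?_ hsubD
          have hw : ContinuousOn (fun s => gk k s (x s) (v j s))
              (Icc (σf k) (σf (k + 1)) ∩ (Icc (σu j) (σu (j + 1)) ∩ Icc t0 tt)) := by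
            have hpt : ContinuousOn (fun s => ((s, x s, v j s) : ℝ × X × Uv))
                (Icc (σf k) (σf (k + 1)) ∩ (Icc (σu j) (σu (j + 1)) ∩ Icc t0 tt)) := by
              apply (continuous_id.continuousOn).prodMk
              exact (hx.1.mono (fun s hs => hsubIcc hs.2.2)).prodMk
                ((hvc j).mono (fun s hs => hs.2.1))
            exact (hgkc k).comp hpt (fun s hs => hs.1)
          exact sg_cont Tg hM hw (fun s hs => hmem s hs.2.2)
        · rintro s ⟨⟨hsf, hsu⟩, hsIoc⟩
          rw [hgkeq k s hsf (x s) (u s), hveq j s hsu]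
    have hG2m : AEStronglyMeasurable (fun s => Tg.T (tt - s) (f s (z s) (0:Uv)))
        (volume.restrict (Ioc t0 tt)) := by
      apply aesm_of_pieces (S := fun k => Ico (σf k) (σf (k + 1)))
        (fun k => measurableSet_Ico) measurableSet_Ioc
      · intro s hs
        exact mem_iUnion.2 (cover_mem hσf0 hσft (le_trans ht0 hs.1.le))
      · intro k
        refine ⟨fun s => Tg.T (tt - s) (gk k s (z s) (0:Uv)), ?_, ?_⟩
        · have hsubD : Ico (σf k) (σf (k + 1)) ∩ Ioc t0 tt ⊆
              Icc (σf k) (σf (k + 1)) ∩ Icc t0 tt := by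
            rintro s ⟨h1, h3⟩
            exact ⟨Ico_subset_Icc_self h1, Ioc_subset_Icc_self h3⟩
          refine ContinuousOn.mono ?_ hsubD
          have hw : ContinuousOn (fun s => gk k s (z s) (0:Uv))
              (Icc (σf k) (σf (k + 1)) ∩ Icc t0 tt) := by
            have hpt : ContinuousOn (fun s => ((s, z s, (0:Uv)) : ℝ × X × Uv))
                (Icc (σf k) (σf (k + 1)) ∩ Icc t0 tt) := by
              apply (continuous_id.continuousOn).prodMk
              exact (hz.1.mono (fun s hs => hsubIcc hs.2)).prodMk continuousOn_const
            exact (hgkc k).comp hpt (fun s hs => hs.1)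
          exact sg_cont Tg hM hw (fun s hs => hmem s hs.2)
        · rintro s ⟨hsf, hsIoc⟩
          rw [hgkeq k s hsf (z s) (0:Uv)]
    -- pointwise norm bounds
    have hb1 : ∀ s ∈ Icc t0 tt, ‖f s (x s) (u s)‖ ≤ N r * (1 + γ ‖u s‖) := by
      intro s hs
      refine (hf3 s (hs0 s hs) (x s) (u s)).trans ?_
      have h1 : N ‖x s‖ ≤ N r :=
        hNmono (mem_Ici.2 (norm_nonneg _)) (mem_Ici.2 hr.le) (hxr s hs)
      have h2 : (0:ℝ) ≤ 1 + γ ‖u s‖ := by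
        have := hγnn _ (norm_nonneg (u s))
        linarith
      exact mul_le_mul_of_nonneg_right h1 h2
    have hb1' : ∀ s ∈ Icc t0 tt, ‖f s (x s) (0:Uv)‖ ≤ N r := by
      intro s hs
      have h0 := hf3 s (hs0 s hs) (x s) (0:Uv)
      rw [norm_zero, hγ0] at h0
      have h1 : N ‖x s‖ ≤ N r :=
        hNmono (mem_Ici.2 (norm_nonneg _)) (mem_Ici.2 hr.le) (hxr s hs)
      calc ‖f s (x s) (0:Uv)‖ ≤ N ‖x s‖ * (1 + 0) := h0
        _ = N ‖x s‖ := by ring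
        _ ≤ N r := h1
    have hb2 : ∀ s ∈ Icc t0 tt, ‖f s (z s) (0:Uv)‖ ≤ N r := by
      intro s hs
      have h0 := hf3 s (hs0 s hs) (z s) (0:Uv)
      rw [norm_zero, hγ0] at h0
      have h1 : N ‖z s‖ ≤ N r :=
        hNmono (mem_Ici.2 (norm_nonneg _)) (mem_Ici.2 hr.le) (hzr s hs)
      calc ‖f s (z s) (0:Uv)‖ ≤ N ‖z s‖ * (1 + 0) := h0
        _ = N ‖z s‖ := by ring
        _ ≤ N r := h1
    -- integrability of the two integrands
    have hφint' : IntegrableOn φ (Ioc t0 tt) := hφint.mono_set (Ioc_subset_Ioc_right htt2)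
    have hG1int : IntegrableOn (fun s => Tg.T (tt - s) (f s (x s) (u s))) (Ioc t0 tt) := by
      refine Integrable.mono' (g := fun s => M * N r + (M * N r) * φ s)
        ?_ hG1m ?_
      · exact (integrableOn_const measure_Ioc_lt_top.ne).add (hφint'.const_mul _)
      · rw [ae_restrict_iff' measurableSet_Ioc]
        refine ae_of_all _ fun s hs => ?_
        have hs' := Ioc_subset_Icc_self hs
        calc ‖Tg.T (tt - s) (f s (x s) (u s))‖ ≤ M * ‖f s (x s) (u s)‖ := hopn s hs' _
          _ ≤ M * (N r * (1 + γ ‖u s‖)) :=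
            mul_le_mul_of_nonneg_left (hb1 s hs') hM0.le
          _ = M * N r + (M * N r) * φ s := by rw [hφdef]; ring
    have hG2int : IntegrableOn (fun s => Tg.T (tt - s) (f s (z s) (0:Uv))) (Ioc t0 tt) := by
      refine Integrable.mono' (g := fun _ => M * N r) ?_ hG2m ?_
      · exact integrableOn_const measure_Ioc_lt_top.ne
      · rw [ae_restrict_iff' measurableSet_Ioc]
        refine ae_of_all _ fun s hs => ?_
        have hs' := Ioc_subset_Icc_self hs
        calc ‖Tg.T (tt - s) (f s (z s) (0:Uv))‖ ≤ M * ‖f s (z s) (0:Uv)‖ := hopn s hs' _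
          _ ≤ M * N r := mul_le_mul_of_nonneg_left (hb2 s hs') hM0.le
    have hG1ii : IntervalIntegrable (fun s => Tg.T (tt - s) (f s (x s) (u s))) volume t0 tt :=
      (intervalIntegrable_iff_integrableOn_Ioc_of_le htt1).2 hG1int
    have hG2ii : IntervalIntegrable (fun s => Tg.T (tt - s) (f s (z s) (0:Uv))) volume t0 tt :=
      (intervalIntegrable_iff_integrableOn_Ioc_of_le htt1).2 hG2int
    -- the difference identity
    have hxt := hx.2 tt ⟨htt1, htt2⟩
    have hzt := hz.2 tt ⟨htt1, htt2⟩
    simp only at hzt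
    have hfun : (fun s => Tg.T (tt - s) (f s (x s) (u s)) - Tg.T (tt - s) (f s (z s) (0:Uv)))
        = fun s => Tg.T (tt - s) (f s (x s) (u s) - f s (z s) (0:Uv)) :=
      funext fun s => (map_sub (Tg.T (tt - s)) _ _).symm
    have hsubid : x tt - z tt =
        ∫ s in t0..tt, Tg.T (tt - s) (f s (x s) (u s) - f s (z s) (0:Uv)) := by
      rw [← hfun, intervalIntegral.integral_sub hG1ii hG2ii, hxt, hzt, hxz]
      abel
    have hFii : IntervalIntegrable
        (fun s => Tg.T (tt - s) (f s (x s) (u s) - f s (z s) (0:Uv))) volume t0 tt := by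
      rw [← hfun]
      exact hG1ii.sub hG2ii
    have hφii : IntervalIntegrable φ volume t0 tt :=
      (intervalIntegrable_iff_integrableOn_Ioc_of_le htt1).2 hφint'
    have hBii : IntervalIntegrable (fun s => M * ε₁ + (M * (N r * c)) * φ s + K * g s)
        volume t0 tt :=
      ((intervalIntegrable_const).add (hφii.const_mul _)).add
        ((hgc.intervalIntegrable t0 tt).const_mul K)
    -- pointwise bound on the integrand
    have hptw : ∀ s ∈ Icc t0 tt, ‖Tg.T (tt - s) (f s (x s) (u s) - f s (z s) (0:Uv))‖ ≤
        M * ε₁ + (M * (N r * c)) * φ s + K * g s := by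
      intro s hs
      have htri : ‖f s (x s) (u s) - f s (z s) (0:Uv)‖ ≤
          ‖f s (x s) (u s) - f s (x s) (0:Uv)‖ + ‖f s (x s) (0:Uv) - f s (z s) (0:Uv)‖ := by
        simpa [dist_eq_norm] using
          dist_triangle (f s (x s) (u s)) (f s (x s) (0:Uv)) (f s (z s) (0:Uv))
      have hterm2 : ‖f s (x s) (0:Uv) - f s (z s) (0:Uv)‖ ≤ L' * g s := by
        rw [hgeq s (hsubIcc hs)]
        exact hLip s (hs0 s hs) (x s) (z s) (0:Uv) (hxr s hs) (hzr s hs)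
          (by rw [norm_zero]; exact hr.le)
      have hterm1 : ‖f s (x s) (u s) - f s (x s) (0:Uv)‖ ≤ ε₁ + (N r * c) * φ s := by
        by_cases hcase : ‖u s‖ ≤ δ₂
        · have h1 := hδ₂ s (hs0 s hs) (x s) (u s) (hxr s hs) hcase
          have h2 : (0:ℝ) ≤ (N r * c) * φ s :=
            mul_nonneg (mul_nonneg hNr.le hc.le) (hφnn s)
          linarith
        · push_neg at hcase
          have hγs : γ δ₂ ≤ γ ‖u s‖ :=
            (hγm (mem_Ici.2 hδ₂pos.le) (mem_Ici.2 (norm_nonneg _)) hcase).le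
          have e1 := hb1 s hs
          have e2 := hb1' s hs
          have h2c : (2:ℝ) ≤ (2 / γ δ₂) * γ ‖u s‖ := by
            rw [div_mul_eq_mul_div, le_div_iff₀ hgδ]
            nlinarith
          have htri2 : ‖f s (x s) (u s) - f s (x s) (0:Uv)‖ ≤
              N r * (1 + γ ‖u s‖) + N r := by
            have := norm_sub_le (f s (x s) (u s)) (f s (x s) (0:Uv))
            linarith
          have hcγ : N r * (1 + γ ‖u s‖) + N r ≤ (N r * c) * γ ‖u s‖ := by
            rw [hcdef]
            nlinarith
          have hφs : φ s = γ ‖u s‖ := by rw [hφdef]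
          rw [hφs]
          nlinarith
      calc ‖Tg.T (tt - s) (f s (x s) (u s) - f s (z s) (0:Uv))‖
          ≤ M * ‖f s (x s) (u s) - f s (z s) (0:Uv)‖ := hopn s hs _
        _ ≤ M * ((ε₁ + (N r * c) * φ s) + L' * g s) := by
            refine mul_le_mul_of_nonneg_left ?_ hM0.le
            linarith
        _ = M * ε₁ + (M * (N r * c)) * φ s + K * g s := by rw [hKdef]; ring
    -- putting the estimate together
    have hnorm : ‖x tt - z tt‖ ≤ ∫ s in t0..tt, (M * ε₁ + (M * (N r * c)) * φ s + K * g s) := by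
      rw [hsubid]
      refine (intervalIntegral.norm_integral_le_integral_norm htt1).trans ?_
      exact intervalIntegral.integral_mono_on htt1 hFii.norm hBii hptw
    have hsplit : (∫ s in t0..tt, (M * ε₁ + (M * (N r * c)) * φ s + K * g s))
        = M * ε₁ * (tt - t0) + (M * (N r * c)) * (∫ s in t0..tt, φ s)
          + K * (∫ s in t0..tt, g s) := by
      rw [intervalIntegral.integral_add ((intervalIntegrable_const).add (hφii.const_mul _))
        ((hgc.intervalIntegrable t0 tt).const_mul K),
        intervalIntegral.integral_add (intervalIntegrable_const) (hφii.const_mul _),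
        intervalIntegral.integral_const, intervalIntegral.integral_const_mul,
        intervalIntegral.integral_const_mul, smul_eq_mul]
      ring
    have hφb := hφbound tt ⟨htt1, htt2⟩
    have hgint : (∫ s in t0..tt, g s) = h tt := by rw [hhdef]
    have ht1 : M * ε₁ * (tt - t0) ≤ M * ε₁ * T :=
      mul_le_mul_of_nonneg_left httT (by positivity)
    have ht2 : (M * (N r * c)) * (∫ s in t0..tt, φ s) ≤ (M * (N r * c)) * δ :=
      mul_le_mul_of_nonneg_left hφb (by positivity)
    rw [hgeq tt ⟨htt1, htt2⟩, hCdef]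
    rw [hsplit, hgint] at hnorm
    linarith
  -- Grönwall
  have hgron : ∀ tt ∈ Icc t0 tstar, ‖h tt‖ ≤ gronwallBound 0 K C (tt - t0) := by
    apply norm_le_gronwallBound_of_norm_deriv_right_le (f' := g)
    · exact hcont.continuousOn
    · exact fun tt _ => (hder tt).hasDerivWithinAt
    · rw [hhdef]
      simp
    · intro tt htt
      have h1 := key tt ⟨htt.1, htt.2.le⟩
      have h2 : h tt ≤ ‖h tt‖ := le_abs_self _
      rw [Real.norm_eq_abs, abs_of_nonneg (hgnn tt)]
      nlinarith
  -- conclusion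
  intro t htmem
  have h1 := key t htmem
  have h2 := hgron t htmem
  rw [gronwallBound_of_K_ne_0 hK.ne'] at h2
  set e : ℝ := Real.exp (K * (t - t0)) with hedef
  have hepos : (0:ℝ) < e := Real.exp_pos _
  have h3 : h t ≤ ‖h t‖ := le_abs_self _
  have h4 : K * h t ≤ K * (0 * e + C / K * (e - 1)) := by
    refine mul_le_mul_of_nonneg_left (h3.trans h2) hK.le
  have h5 : K * (0 * e + C / K * (e - 1)) = C * (e - 1) := by
    field_simp
    ring
  have h6 : g t ≤ C * e := by
    rw [h5] at h4
    nlinarith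
  have hexp : e ≤ E := by
    rw [hedef, hEdef]
    refine Real.exp_le_exp.2 ?_
    have : t - t0 ≤ T := by
      have := htmem.2
      linarith
    nlinarith
  have h7 : C * e ≤ C * E := mul_le_mul_of_nonneg_left hexp hCnn
  have hCE : C * E ≤ ε := by
    have hEne : E ≠ 0 := hE0.ne'
    have hCeq : C * E = ε := by
      rw [hCdef, hε₁def, hδdef]
      field_simp
      ring
    linarith [hCeq.le]
  rw [← hgeq t htmem]
  linarith
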